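/- Under the birational transformation x = q₁, y = p₁+p₂-q₁², z = 2q₁³-2q₁p₂+2q₂p₂+α₀+α₂, w = -6q₁⁴+8q₁²p₂+6q₁²p₁+2q₂²p₂-4q₁q₂p₂-2α₀(q₁-q₂), the Hamiltonian flow of K₁ satisfies dx/dt = y, dy/dt = z, dz/dt = w along solutions of the system dq_i/dt = ∂K₁/∂p_i, dp_i/dt = -∂K₁/∂q_i. -/
import Mathlib


/-- K₁ of the autonomous system; coordinates (q₁,p₁,q₂,p₂). -/
noncomputable def K1 (α₀ α₂ : ℂ) (q : ℂ × ℂ × ℂ × ℂ) : ℂ :=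
  -q.1 ^ 2 * q.2.1 + q.2.1 ^ 2 / 2 - α₂ * q.1
    - q.2.2.1 ^ 2 * q.2.2.2 + q.2.2.2 ^ 2 / 2 - α₀ * q.2.2.1 + q.2.1 * q.2.2.2

noncomputable def pq1 (f : ℂ × ℂ × ℂ × ℂ → ℂ) (p : ℂ × ℂ × ℂ × ℂ) : ℂ :=
  fderiv ℂ f p (1, 0, 0, 0)
noncomputable def pp1 (f : ℂ × ℂ × ℂ × ℂ → ℂ) (p : ℂ × ℂ × ℂ × ℂ) : ℂ :=
  fderiv ℂ f p (0, 1, 0, 0)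
noncomputable def pq2 (f : ℂ × ℂ × ℂ × ℂ → ℂ) (p : ℂ × ℂ × ℂ × ℂ) : ℂ :=
  fderiv ℂ f p (0, 0, 1, 0)
noncomputable def pp2 (f : ℂ × ℂ × ℂ × ℂ → ℂ) (p : ℂ × ℂ × ℂ × ℂ) : ℂ :=
  fderiv ℂ f p (0, 0, 0, 1)

/-- The derivative of F along the Hamiltonian flow of K₁. -/
noncomputable def flowD (α₀ α₂ : ℂ) (F : ℂ × ℂ × ℂ × ℂ → ℂ) (p : ℂ × ℂ × ℂ × ℂ) : ℂ :=
  pq1 F p * pp1 (K1 α₀ α₂) p - pp1 F p * pq1 (K1 α₀ α₂) p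
    + pq2 F p * pp2 (K1 α₀ α₂) p - pp2 F p * pq2 (K1 α₀ α₂) p

set_option maxHeartbeats 1000000 in
/-- Under the birational transformation x = q₁, y = p₁+p₂-q₁², etc., the flow of K₁
satisfies dx/dt = y, dy/dt = z, dz/dt = w. -/
theorem flow_of_K1 (α₀ α₁ α₂ : ℂ) (hsum : α₀ + α₁ + α₂ = 0) (p : ℂ × ℂ × ℂ × ℂ) :
    (flowD α₀ α₂ (fun q => q.1) p = (fun q : ℂ × ℂ × ℂ × ℂ =>
        q.2.1 + q.2.2.2 - q.1 ^ 2) p) ∧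
    (flowD α₀ α₂ (fun q => q.2.1 + q.2.2.2 - q.1 ^ 2) p = (fun q : ℂ × ℂ × ℂ × ℂ =>
        2 * q.1 ^ 3 - 2 * q.1 * q.2.2.2 + 2 * q.2.2.1 * q.2.2.2 + α₀ + α₂) p) ∧
    (flowD α₀ α₂ (fun q =>
        2 * q.1 ^ 3 - 2 * q.1 * q.2.2.2 + 2 * q.2.2.1 * q.2.2.2 + α₀ + α₂) p
      = (fun q : ℂ × ℂ × ℂ × ℂ =>
        -6 * q.1 ^ 4 + 8 * q.1 ^ 2 * q.2.2.2 + 6 * q.1 ^ 2 * q.2.1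
          + 2 * q.2.2.1 ^ 2 * q.2.2.2 - 4 * q.1 * q.2.2.1 * q.2.2.2
          - 2 * α₀ * (q.1 - q.2.2.1)) p) := by
  have hq1 : HasFDerivAt (fun q : ℂ × ℂ × ℂ × ℂ => q.1)
      (ContinuousLinearMap.fst ℂ ℂ (ℂ × ℂ × ℂ)) p := hasFDerivAt_fst
  have hp1 := HasFDerivAt.fst (hasFDerivAt_snd (𝕜 := ℂ) (p := p))
  have hq2 := HasFDerivAt.fst (HasFDerivAt.snd (hasFDerivAt_snd (𝕜 := ℂ) (p := p)))
  have hp2 := HasFDerivAt.snd (HasFDerivAt.snd (hasFDerivAt_snd (𝕜 := ℂ) (p := p)))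
  have hq1s := (hasDerivAt_pow 2 p.1).comp_hasFDerivAt p hq1
  have hp1s := (hasDerivAt_pow 2 p.2.1).comp_hasFDerivAt p hp1
  have hq2s := (hasDerivAt_pow 2 p.2.2.1).comp_hasFDerivAt p hq2
  have hp2s := (hasDerivAt_pow 2 p.2.2.2).comp_hasFDerivAt p hp2
  have hq1c := (hasDerivAt_pow 3 p.1).comp_hasFDerivAt p hq1
  obtain ⟨LK, hK, eK1, eK2, eK3, eK4⟩ :
      ∃ L : (ℂ × ℂ × ℂ × ℂ) →L[ℂ] ℂ, HasFDerivAt (K1 α₀ α₂) L p ∧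
        L (1,0,0,0) = -2*p.1*p.2.1 - α₂ ∧ L (0,1,0,0) = -p.1^2 + p.2.1 + p.2.2.2 ∧
        L (0,0,1,0) = -2*p.2.2.1*p.2.2.2 - α₀ ∧
        L (0,0,0,1) = -p.2.2.1^2 + p.2.2.2 + p.2.1 := by
    have hK := ((((((hq1s.neg.mul hp1).add (hp1s.mul_const ((2:ℂ)⁻¹))).sub
        (hq1.const_mul α₂)).sub (hq2s.mul hp2)).add (hp2s.mul_const ((2:ℂ)⁻¹))).sub
        (hq2.const_mul α₀)).add (hp1.mul hp2)
    refine ⟨_, hK, ?_, ?_, ?_, ?_⟩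
    all_goals
      simp [ContinuousLinearMap.add_apply, ContinuousLinearMap.sub_apply,
        ContinuousLinearMap.smul_apply, ContinuousLinearMap.comp_apply,
        ContinuousLinearMap.coe_fst', ContinuousLinearMap.coe_snd',
        ContinuousLinearMap.neg_apply, smul_eq_mul]
      try ring
  obtain ⟨L1, h1, e11, e12, e13, e14⟩ :
      ∃ L : (ℂ × ℂ × ℂ × ℂ) →L[ℂ] ℂ,
        HasFDerivAt (fun q : ℂ × ℂ × ℂ × ℂ => q.1) L p ∧
        L (1,0,0,0) = 1 ∧ L (0,1,0,0) = 0 ∧ L (0,0,1,0) = 0 ∧ L (0,0,0,1) = 0 := by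
    refine ⟨_, hq1, ?_, ?_, ?_, ?_⟩ <;> simp
  obtain ⟨L2, h2, e21, e22, e23, e24⟩ :
      ∃ L : (ℂ × ℂ × ℂ × ℂ) →L[ℂ] ℂ,
        HasFDerivAt (fun q : ℂ × ℂ × ℂ × ℂ => q.2.1 + q.2.2.2 - q.1 ^ 2) L p ∧
        L (1,0,0,0) = -2*p.1 ∧ L (0,1,0,0) = 1 ∧ L (0,0,1,0) = 0 ∧ L (0,0,0,1) = 1 := by
    have h := (hp1.add hp2).sub hq1s
    refine ⟨_, h, ?_, ?_, ?_, ?_⟩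
    all_goals
      simp [ContinuousLinearMap.add_apply, ContinuousLinearMap.sub_apply,
        ContinuousLinearMap.smul_apply, ContinuousLinearMap.comp_apply,
        ContinuousLinearMap.coe_fst', ContinuousLinearMap.coe_snd',
        ContinuousLinearMap.neg_apply, smul_eq_mul]
      try ring
  obtain ⟨L3, h3, e31, e32, e33, e34⟩ :
      ∃ L : (ℂ × ℂ × ℂ × ℂ) →L[ℂ] ℂ,
        HasFDerivAt (fun q : ℂ × ℂ × ℂ × ℂ =>
          2 * q.1 ^ 3 - 2 * q.1 * q.2.2.2 + 2 * q.2.2.1 * q.2.2.2 + α₀ + α₂) L p ∧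
        L (1,0,0,0) = 6*p.1^2 - 2*p.2.2.2 ∧ L (0,1,0,0) = 0 ∧
        L (0,0,1,0) = 2*p.2.2.2 ∧ L (0,0,0,1) = -2*p.1 + 2*p.2.2.1 := by
    have h := ((((hq1c.const_mul 2).sub ((hq1.const_mul 2).mul hp2)).add
        ((hq2.const_mul 2).mul hp2)).add_const α₀).add_const α₂
    refine ⟨_, h, ?_, ?_, ?_, ?_⟩
    all_goals
      simp [ContinuousLinearMap.add_apply, ContinuousLinearMap.sub_apply,
        ContinuousLinearMap.smul_apply, ContinuousLinearMap.comp_apply,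
        ContinuousLinearMap.coe_fst', ContinuousLinearMap.coe_snd',
        ContinuousLinearMap.neg_apply, smul_eq_mul]
      try ring
  refine ⟨?_, ?_, ?_⟩ <;>
    simp only [flowD, pq1, pp1, pq2, pp2, h1.fderiv, h2.fderiv, h3.fderiv, hK.fderiv,
      e11, e12, e13, e14, e21, e22, e23, e24, e31, e32, e33, e34, eK1, eK2, eK3, eK4] <;>
    ring
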